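/- For a Cantor set X ⊂ ℂ^N (compact, totally disconnected, perfect metric space), the generalized argument principle for X is equivalent to the equality of the polynomial and rational hulls of X. -/

import Mathlib

open MvPolynomial Set Topology

/-- The polynomial hull of a set `X ⊆ ℂ^N`. -/
def polyHull (N : ℕ) (X : Set (Fin N → ℂ)) : Set (Fin N → ℂ) :=
  {z | ∀ p : MvPolynomial (Fin N) ℂ,
    ‖eval z p‖ ≤ sSup ((fun x => ‖eval x p‖) '' X)}

/-- `X` satisfies the generalized argument principle: every polynomial having a
continuous logarithm on `X` has no zeros on the polynomial hull of `X`. -/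
def GenArgPrinciple (N : ℕ) (X : Set (Fin N → ℂ)) : Prop :=
  ∀ p : MvPolynomial (Fin N) ℂ,
    (∃ g : (Fin N → ℂ) → ℂ, ContinuousOn g X ∧ ∀ x ∈ X, eval x p = Complex.exp (g x)) →
    ∀ z ∈ polyHull N X, eval z p ≠ 0

/-- `Y` is simply coconnected: every zero-free continuous function on `Y` has a
continuous logarithm. -/
def SimplyCoconnected (N : ℕ) (Y : Set (Fin N → ℂ)) : Prop :=
  ∀ f : (Fin N → ℂ) → ℂ, ContinuousOn f Y → (∀ y ∈ Y, f y ≠ 0) →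
    ∃ g : (Fin N → ℂ) → ℂ, ContinuousOn g Y ∧ ∀ y ∈ Y, f y = Complex.exp (g y)

/-- The rational hull of a set `X ⊆ ℂ^N`:
`{z | every polynomial vanishing at z has a zero on X}`. -/
def ratHull (N : ℕ) (X : Set (Fin N → ℂ)) : Set (Fin N → ℂ) :=
  {z | ∀ p : MvPolynomial (Fin N) ℂ, eval z p = 0 → ∃ x ∈ X, eval x p = 0}

/-- Core lemma: on a compact totally disconnected Hausdorff space, every
zero-free continuous complex function has a continuous logarithm. -/
lemma exists_cont_log {Y : Type*} [TopologicalSpace Y] [CompactSpace Y] [T2Space Y]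
    [TotallyDisconnectedSpace Y] (F : Y → ℂ) (hF : Continuous F) (h0 : ∀ y, F y ≠ 0) :
    ∃ G : Y → ℂ, Continuous G ∧ ∀ y, F y = Complex.exp (G y) := by
  classical
  rcases isEmpty_or_nonempty Y with hY | hY
  · exact ⟨0, continuous_const, fun y => (IsEmpty.false y).elim⟩
  -- open cover by preimages of balls not containing 0
  set U : Y → Set Y := fun x => F ⁻¹' Metric.ball (F x) ‖F x‖ with hU
  have hUopen : ∀ x, IsOpen (U x) := fun x => (Metric.isOpen_ball).preimage hF
  have hUmem : ∀ x, x ∈ U x := fun x => by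
    simp only [hU, mem_preimage, Metric.mem_ball, dist_self]
    exact norm_pos_iff.2 (h0 x)
  -- clopen refinement
  have hV : ∀ x : Y, ∃ V : Set Y, IsClopen V ∧ x ∈ V ∧ V ⊆ U x := fun x =>
    compact_exists_isClopen_in_isOpen (hUopen x) (hUmem x)
  choose V hVclopen hVmem hVsub using hV
  -- finite subcover
  obtain ⟨t, ht⟩ := isCompact_univ.elim_finite_subcover V (fun x => (hVclopen x).2)
    (fun y _ => mem_iUnion.2 ⟨y, hVmem y⟩)
  set L : List Y := t.toList with hL
  have hd : Y := Classical.arbitrary Y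
  set xk : ℕ → Y := fun k => if h : k < L.length then L.get ⟨k, h⟩ else hd with hxk
  set W : ℕ → Set Y := fun k => if h : k < L.length then V (L.get ⟨k, h⟩) else ∅ with hW
  have hWclopen : ∀ k, IsClopen (W k) := by
    intro k; simp only [hW]; split
    · exact hVclopen _
    · exact isClopen_empty
  have hWsub : ∀ k, W k ⊆ U (xk k) := by
    intro k; simp only [hW, hxk]; split
    · exact hVsub _
    · exact empty_subset _
  have hcov : ∀ y : Y, ∃ k, y ∈ W k := by
    intro y
    obtain ⟨x, hxt, hyx⟩ := mem_iUnion₂.1 (ht (mem_univ y))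
    have hxL : x ∈ L := by simp [hL, Finset.mem_toList, hxt]
    obtain ⟨n, hn⟩ := List.get_of_mem hxL
    refine ⟨n.1, ?_⟩
    simp only [hW, dif_pos n.2]
    have he : L.get ⟨n.1, n.2⟩ = x := hn
    rw [he]; exact hyx
  set ind : Y → ℕ := fun y => Nat.find (hcov y) with hind
  have hindW : ∀ y, y ∈ W (ind y) := fun y => Nat.find_spec (hcov y)
  set c : Y → ℂ := fun y => F (xk (ind y)) with hc
  -- basic estimates
  have hkey : ∀ y, ‖F y - c y‖ < ‖c y‖ := by
    intro y
    have h1 := hWsub (ind y) (hindW y)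
    simpa [hU, hc, Metric.mem_ball, dist_eq_norm] using h1
  have hc0 : ∀ y, c y ≠ 0 := by
    intro y hy
    have h1 := hkey y
    rw [hy] at h1
    simp at h1
    exact (norm_nonneg _).not_gt h1
  have hslit : ∀ y, F y / c y ∈ Complex.slitPlane := by
    intro y
    rw [Complex.mem_slitPlane_iff]
    left
    have h1 : ‖F y / c y - 1‖ < 1 := by
      rw [show F y / c y - 1 = (F y - c y) / c y by rw [sub_div, div_self (hc0 y)]]
      rw [norm_div]
      exact (div_lt_one (norm_pos_iff.2 (hc0 y))).2 (hkey y)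
    have h2 : |(F y / c y - 1).re| ≤ ‖F y / c y - 1‖ := Complex.abs_re_le_norm _
    have h3 : (F y / c y - 1).re = (F y / c y).re - 1 := by
      rw [Complex.sub_re, Complex.one_re]
    nlinarith [abs_le.1 h2]
  -- the logarithm
  refine ⟨fun y => Complex.log (c y) + Complex.log (F y / c y), ?_, ?_⟩
  · rw [continuous_iff_continuousAt]
    intro y
    set k : ℕ := ind y with hk
    set O : Set Y := W k \ ⋃ j ∈ Finset.range k, W j with hO
    have hOopen : IsOpen O :=
      (hWclopen k).2.sdiff (isClosed_biUnion_finset fun j _ => (hWclopen j).1)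
    have hyO : y ∈ O := by
      refine ⟨hindW y, ?_⟩
      simp only [mem_iUnion, Finset.mem_range, not_exists]
      intro j hj
      exact Nat.find_min (hcov y) hj
    have hindO : ∀ y' ∈ O, ind y' = k := by
      rintro y' ⟨h1, h2⟩
      simp only [mem_iUnion, Finset.mem_range, not_exists] at h2
      exact Nat.find_eq_iff (hcov y') |>.2 ⟨h1, fun m hm => h2 m hm⟩
    have hgk : ContinuousAt
        (fun y' => Complex.log (F (xk k)) + Complex.log (F y' / F (xk k))) y := by
      refine continuousAt_const.add ?_
      have hdiv : ContinuousAt (fun y' => F y' / F (xk k)) y :=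
        hF.continuousAt.div_const _
      exact (continuousAt_clog (by simpa [hc, hk] using hslit y)).comp hdiv
    refine hgk.congr ?_
    filter_upwards [hOopen.mem_nhds hyO] with y' hy'
    have : c y' = F (xk k) := by rw [hc]; simp only; rw [hindO y' hy']
    rw [this]
  · intro y
    rw [Complex.exp_add, Complex.exp_log (hc0 y),
      Complex.exp_log (div_ne_zero (h0 y) (hc0 y)), mul_div_cancel₀ _ (hc0 y)]

lemma simplyCoconnected_aux (N : ℕ) (X : Set (Fin N → ℂ)) (hX : IsCompact X)
    (htd : IsTotallyDisconnected X) (f : (Fin N → ℂ) → ℂ) (hf : ContinuousOn f X)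
    (h0 : ∀ y ∈ X, f y ≠ 0) :
    ∃ g : (Fin N → ℂ) → ℂ, ContinuousOn g X ∧ ∀ y ∈ X, f y = Complex.exp (g y) := by
  classical
  haveI : CompactSpace ↥X := isCompact_iff_compactSpace.mp hX
  haveI : TotallyDisconnectedSpace ↥X := by
    rw [totallyDisconnectedSpace_subtype_iff]; exact htd
  obtain ⟨G, hGc, hGe⟩ := exists_cont_log (X.restrict f) hf.restrict (fun y => h0 y y.2)
  refine ⟨fun z => if h : z ∈ X then G ⟨z, h⟩ else 0, ?_, ?_⟩
  · rw [continuousOn_iff_continuous_restrict]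
    convert hGc using 1
    ext y
    simp [Set.restrict, y.2]
  · intro y hy
    simpa [hy, Set.restrict] using hGe ⟨y, hy⟩

/-- For a compact, totally disconnected set `X ⊆ ℂ^N` (e.g. a Cantor set), the
generalized argument principle for `X` holds if and only if the polynomial and
rational hulls of `X` coincide. -/
theorem stmt17 (N : ℕ) (X : Set (Fin N → ℂ)) (hX : IsCompact X)
    (htd : IsTotallyDisconnected X) :
    GenArgPrinciple N X ↔ polyHull N X = ratHull N X := by
  constructor
  · intro hgap
    apply Set.Subset.antisymm
    · -- polyHull ⊆ ratHull, using GAP and simply coconnected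
      intro z hz p hpz
      by_contra h
      push_neg at h
      have hf : ContinuousOn (fun x => eval x p) X :=
        (MvPolynomial.continuous_eval (p := p)).continuousOn
      obtain ⟨g, hg, hge⟩ := simplyCoconnected_aux N X hX htd _ hf h
      exact hgap p ⟨g, hg, hge⟩ z hz hpz
    · -- ratHull ⊆ polyHull, always (for compact X)
      intro z hz p
      obtain ⟨x, hxX, hx⟩ := hz (p - C (eval z p)) (by simp)
      have hx' : eval x p = eval z p := by
        have h2 := hx
        simp only [map_sub, eval_C] at h2
        exact sub_eq_zero.mp h2
      rw [← hx']
      apply le_csSup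
      · exact ((hX.image (MvPolynomial.continuous_eval (p := p)).norm).bddAbove)
      · exact ⟨x, hxX, rfl⟩
  · intro heq p ⟨g, hg, hge⟩ z hz hpz
    rw [heq] at hz
    obtain ⟨x, hxX, hx⟩ := hz p hpz
    exact Complex.exp_ne_zero (g x) (hge x hxX ▸ hx)
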